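/- Let J_ν denote the Bessel function of the first kind, J_ν(z) = Σ_{m=0}^∞ (-1)^m (z/2)^{ν+2m}/(m! Γ(ν+m+1)). Then for every t > 0: Σ_{n=1}^∞ n (J_n(2t))² = 2t² (J_0(2t))² − t J_0(2t) J_1(2t) + 2t² (J_1(2t))². Equivalently, with u = t², the normalization function of the modified Susskind–Glogower coherent states satisfies N(u) = (1/u) Σ_{n≥1} n (J_n(2√u))² = 2(J_0(2√u))² − (1/√u) J_0(2√u) J_1(2√u) + 2(J_1(2√u))². -/

import Mathlib

open scoped Nat
open Filter

/-- The Bessel function of the first kind of natural order `n`,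
`J_n(z) = Σ_{m≥0} (-1)^m (z/2)^{n+2m}/(m! Γ(n+m+1))`. -/
noncomputable def besselJ (n : ℕ) (z : ℝ) : ℝ :=
  ∑' m : ℕ, (-1) ^ m * (z / 2) ^ (n + 2 * m) /
    (m.factorial * Real.Gamma ((n : ℝ) + m + 1))

namespace SGmAux

/-- The Bessel series in the half-argument, with factorials. -/
noncomputable def bj (n : ℕ) (t : ℝ) : ℝ :=
  ∑' m : ℕ, (-1) ^ m * t ^ (n + 2 * m) / ((m.factorial : ℝ) * ((n + m).factorial : ℝ))

/-- Exponential-type bound constant. -/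
noncomputable def expE (t : ℝ) : ℝ := ∑' m : ℕ, (t ^ 2) ^ m / (m.factorial : ℝ)

lemma summable_aux (n : ℕ) {t : ℝ} (ht : 0 ≤ t) :
    Summable (fun m : ℕ => t ^ (n + 2 * m) / ((m.factorial : ℝ) * ((n + m).factorial : ℝ))) := by
  refine Summable.of_nonneg_of_le (fun m => by positivity) (fun m => ?_)
    ((Real.summable_pow_div_factorial (t ^ 2)).mul_left (t ^ n))
  have h1 : (1 : ℝ) ≤ ((n + m).factorial : ℝ) := by
    exact_mod_cast Nat.one_le_iff_ne_zero.mpr (Nat.factorial_ne_zero _)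
  have h2 : (0 : ℝ) < (m.factorial : ℝ) := by exact_mod_cast m.factorial_pos
  rw [pow_add, pow_mul]
  calc t ^ n * (t ^ 2) ^ m / ((m.factorial : ℝ) * ((n + m).factorial : ℝ))
      ≤ t ^ n * (t ^ 2) ^ m / ((m.factorial : ℝ) * 1) := by
        gcongr
    _ = t ^ n * ((t ^ 2) ^ m / (m.factorial : ℝ)) := by ring

lemma norm_term (n m : ℕ) {t : ℝ} (ht : 0 ≤ t) :
    ‖(-1 : ℝ) ^ m * t ^ (n + 2 * m) / ((m.factorial : ℝ) * ((n + m).factorial : ℝ))‖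
      = t ^ (n + 2 * m) / ((m.factorial : ℝ) * ((n + m).factorial : ℝ)) := by
  have h : (0 : ℝ) ≤ t ^ (n + 2 * m) / ((m.factorial : ℝ) * ((n + m).factorial : ℝ)) := by
    positivity
  rw [Real.norm_eq_abs, abs_div, abs_mul, abs_pow, abs_pow, abs_neg, abs_one, one_pow, one_mul,
    abs_of_nonneg ht, abs_of_nonneg (by positivity : (0:ℝ) ≤ (m.factorial : ℝ) * ((n + m).factorial : ℝ))]

lemma summable_bj (n : ℕ) {t : ℝ} (ht : 0 ≤ t) :
    Summable (fun m : ℕ => (-1 : ℝ) ^ m * t ^ (n + 2 * m) /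
      ((m.factorial : ℝ) * ((n + m).factorial : ℝ))) := by
  refine Summable.of_norm ?_
  simpa only [norm_term n _ ht] using summable_aux n ht

lemma besselJ_eq (n : ℕ) {t : ℝ} : besselJ n (2 * t) = bj n t := by
  unfold besselJ bj
  refine tsum_congr fun m => ?_
  have h2 : (2 * t) / 2 = t := by ring
  rw [h2]
  congr 2
  rw [show ((n : ℝ) + m + 1) = (((n + m : ℕ) : ℝ) + 1) by push_cast; ring,
    Real.Gamma_nat_eq_factorial]

lemma expE_nonneg (t : ℝ) : 0 ≤ expE t := by
  refine tsum_nonneg fun m => by positivity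

lemma bj_abs_le (n : ℕ) {t : ℝ} (ht : 0 ≤ t) :
    |bj n t| ≤ expE t * (t ^ n / (n.factorial : ℝ)) := by
  have hs := summable_aux n ht
  have h1 : |bj n t| ≤ ∑' m : ℕ, t ^ (n + 2 * m) / ((m.factorial : ℝ) * ((n + m).factorial : ℝ)) := by
    rw [← Real.norm_eq_abs]
    unfold bj
    have := norm_tsum_le_tsum_norm (f := fun m : ℕ => (-1 : ℝ) ^ m * t ^ (n + 2 * m) /
      ((m.factorial : ℝ) * ((n + m).factorial : ℝ))) (by simpa only [norm_term n _ ht] using hs)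
    simpa only [norm_term n _ ht] using this
  refine h1.trans ?_
  have h2 : ∀ m : ℕ, t ^ (n + 2 * m) / ((m.factorial : ℝ) * ((n + m).factorial : ℝ))
      ≤ (t ^ n / (n.factorial : ℝ)) * ((t ^ 2) ^ m / (m.factorial : ℝ)) := by
    intro m
    have hf : ((n.factorial : ℝ)) ≤ ((n + m).factorial : ℝ) := by
      exact_mod_cast Nat.factorial_le (Nat.le_add_right n m)
    rw [pow_add, pow_mul, div_mul_div_comm, mul_comm ((n.factorial : ℝ)) ((m.factorial : ℝ))]
    have hp : (0:ℝ) < (n.factorial : ℝ) := by exact_mod_cast Nat.factorial_pos n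
    gcongr
  calc (∑' m : ℕ, t ^ (n + 2 * m) / ((m.factorial : ℝ) * ((n + m).factorial : ℝ)))
      ≤ ∑' m : ℕ, (t ^ n / (n.factorial : ℝ)) * ((t ^ 2) ^ m / (m.factorial : ℝ)) :=
        Summable.tsum_le_tsum h2 hs ((Real.summable_pow_div_factorial (t ^ 2)).mul_left _)
    _ = (t ^ n / (n.factorial : ℝ)) * expE t := tsum_mul_left
    _ = expE t * (t ^ n / (n.factorial : ℝ)) := by ring

lemma key_term (n m : ℕ) (t : ℝ) :
    t * ((-1 : ℝ) ^ (m + 1) * t ^ (n + 2 * (m + 1)) /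
        (((m + 1).factorial : ℝ) * ((n + (m + 1)).factorial : ℝ)))
      + t * ((-1 : ℝ) ^ m * t ^ ((n + 2) + 2 * m) /
        ((m.factorial : ℝ) * (((n + 2) + m).factorial : ℝ)))
    = ((n : ℝ) + 1) * ((-1 : ℝ) ^ (m + 1) * t ^ ((n + 1) + 2 * (m + 1)) /
        (((m + 1).factorial : ℝ) * (((n + 1) + (m + 1)).factorial : ℝ))) := by
  have e1 : n + 2 * (m + 1) = (n + 2 * m) + 2 := by ring
  have e2 : (n + 2) + 2 * m = (n + 2 * m) + 2 := by ring
  have e3 : (n + 1) + 2 * (m + 1) = (n + 2 * m) + 3 := by ring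
  have e4 : n + (m + 1) = (n + m) + 1 := by ring
  have e5 : (n + 2) + m = (n + m) + 2 := by ring
  have e6 : (n + 1) + (m + 1) = (n + m) + 2 := by ring
  rw [e1, e2, e3, e4, e5, e6, Nat.factorial_succ ((n + m) + 1), Nat.factorial_succ (n + m),
    Nat.factorial_succ m, pow_succ (-1 : ℝ) m, pow_succ t ((n + 2 * m) + 2),
    pow_succ t ((n + 2 * m) + 1), pow_succ t (n + 2 * m)]
  have hm : ((m.factorial : ℝ)) ≠ 0 := by exact_mod_cast m.factorial_ne_zero
  have hnm : (((n + m).factorial : ℝ)) ≠ 0 := by exact_mod_cast (n + m).factorial_ne_zero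
  have hm1 : ((m : ℝ) + 1) ≠ 0 := by positivity
  have hnm1 : ((n : ℝ) + (m : ℝ) + 1) ≠ 0 := by positivity
  have hnm2 : ((n : ℝ) + (m : ℝ) + 2) ≠ 0 := by positivity
  push_cast
  field_simp
  ring

lemma bj_rec (n : ℕ) {t : ℝ} (ht : 0 ≤ t) :
    t * bj n t + t * bj (n + 2) t = ((n : ℝ) + 1) * bj (n + 1) t := by
  have s0 := summable_bj n ht
  have s1 := summable_bj (n + 1) ht
  have s2 := summable_bj (n + 2) ht
  unfold bj
  rw [← tsum_mul_left, ← tsum_mul_left, ← tsum_mul_left,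
    Summable.tsum_eq_zero_add (s0.mul_left t), Summable.tsum_eq_zero_add (s1.mul_left _)]
  have hhead : t * ((-1 : ℝ) ^ (0:ℕ) * t ^ (n + 2 * 0) / (((0:ℕ).factorial : ℝ) * ((n + 0).factorial : ℝ)))
      = ((n : ℝ) + 1) * ((-1 : ℝ) ^ (0:ℕ) * t ^ ((n + 1) + 2 * 0) / (((0:ℕ).factorial : ℝ) * (((n + 1) + 0).factorial : ℝ))) := by
    simp only [pow_zero, one_mul, Nat.factorial_zero, Nat.add_zero, Nat.cast_one]
    rw [Nat.factorial_succ n]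
    have hn : ((n.factorial : ℝ)) ≠ 0 := by exact_mod_cast n.factorial_ne_zero
    push_cast
    field_simp
    ring
  rw [add_assoc, hhead]
  congr 1
  rw [← Summable.tsum_add ((((summable_nat_add_iff 1).mpr s0).mul_left t)) (s2.mul_left t)]
  exact tsum_congr fun m => key_term n m t

/-- The telescoping auxiliary sequence. -/
noncomputable def dd (t : ℝ) (n : ℕ) : ℝ :=
  2 * t ^ 2 * ((bj n t) ^ 2 + (bj (n + 1) t) ^ 2)
    - t * (2 * (n : ℝ) + 1) * (bj n t) * (bj (n + 1) t)

lemma tele (n : ℕ) {t : ℝ} (ht : 0 < t) :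
    dd t n - dd t (n + 1) = ((n : ℝ) + 1) * (bj (n + 1) t) ^ 2 := by
  have hrec := bj_rec n ht.le
  have h2 : bj (n + 2) t = (((n : ℝ) + 1) * bj (n + 1) t - t * bj n t) / t := by
    field_simp
    linarith [hrec]
  unfold dd
  rw [show n + 1 + 1 = n + 2 from rfl, h2]
  push_cast
  field_simp
  ring

lemma sq_bound (n : ℕ) {t : ℝ} (ht : 0 ≤ t) :
    (bj n t) ^ 2 ≤ (expE t) ^ 2 * ((t ^ 2) ^ n / (n.factorial : ℝ)) := by
  have hb := bj_abs_le n ht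
  have hE := expE_nonneg t
  have hf1 : (1 : ℝ) ≤ (n.factorial : ℝ) := by
    exact_mod_cast Nat.one_le_iff_ne_zero.mpr (Nat.factorial_ne_zero n)
  have hfp : (0 : ℝ) < (n.factorial : ℝ) := by linarith
  have hsq : (bj n t) ^ 2 ≤ (expE t * (t ^ n / (n.factorial : ℝ))) ^ 2 := by
    rw [← sq_abs (bj n t)]
    exact pow_le_pow_left₀ (abs_nonneg _) hb 2
  refine hsq.trans ?_
  have hp : (t ^ n) ^ 2 = (t ^ 2) ^ n := by
    rw [← pow_mul, ← pow_mul, Nat.mul_comm]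
  rw [mul_pow, div_pow, hp]
  gcongr
  exact le_self_pow₀ hf1 two_ne_zero

lemma prod_bound (n : ℕ) {t : ℝ} (ht : 0 ≤ t) :
    (2 * (n : ℝ) + 1) * |bj n t| * |bj (n + 1) t|
      ≤ 2 * (expE t) ^ 2 * t * ((t ^ 2) ^ n / (n.factorial : ℝ)) := by
  have hb1 := bj_abs_le n ht
  have hb2 := bj_abs_le (n + 1) ht
  have hE := expE_nonneg t
  have hf1 : (1 : ℝ) ≤ (n.factorial : ℝ) := by
    exact_mod_cast Nat.one_le_iff_ne_zero.mpr (Nat.factorial_ne_zero n)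
  have hfp : (0 : ℝ) < (n.factorial : ℝ) := by linarith
  have hcn : (0 : ℝ) ≤ 2 * (n : ℝ) + 1 := by positivity
  have step1 : (2 * (n : ℝ) + 1) * |bj n t| * |bj (n + 1) t|
      ≤ (2 * (n : ℝ) + 1) * (expE t * (t ^ n / (n.factorial : ℝ)))
        * (expE t * (t ^ (n + 1) / ((n + 1).factorial : ℝ))) := by
    apply mul_le_mul
    · exact mul_le_mul_of_nonneg_left hb1 hcn
    · exact hb2
    · exact abs_nonneg _
    · positivity
  refine step1.trans ?_
  rw [Nat.factorial_succ n]
  have hE2 : (0 : ℝ) ≤ expE t ^ 2 * t * (t ^ 2) ^ n := by positivity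
  push_cast
  calc (2 * (n : ℝ) + 1) * (expE t * (t ^ n / (n.factorial : ℝ)))
        * (expE t * (t ^ (n + 1) / (((n : ℝ) + 1) * (n.factorial : ℝ))))
      = (expE t ^ 2 * t * (t ^ 2) ^ n) * ((2 * (n : ℝ) + 1) / (((n : ℝ) + 1) * (n.factorial : ℝ) * (n.factorial : ℝ))) := by
        field_simp
        ring
    _ ≤ (expE t ^ 2 * t * (t ^ 2) ^ n) * ((2 * ((n : ℝ) + 1)) / (((n : ℝ) + 1) * (n.factorial : ℝ) * (n.factorial : ℝ))) := by
        gcongr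
        linarith
    _ = (expE t ^ 2 * t * (t ^ 2) ^ n) * (2 / ((n.factorial : ℝ) * (n.factorial : ℝ))) := by
        have hne : ((n : ℝ) + 1) ≠ 0 := by positivity
        field_simp
    _ ≤ (expE t ^ 2 * t * (t ^ 2) ^ n) * (2 / ((n.factorial : ℝ) * 1)) := by
        gcongr
    _ = 2 * expE t ^ 2 * t * ((t ^ 2) ^ n / (n.factorial : ℝ)) := by
        rw [mul_one]
        ring

lemma summable_f {t : ℝ} (ht : 0 ≤ t) :
    Summable (fun n : ℕ => (n : ℝ) * (bj n t) ^ 2) := by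
  refine Summable.of_nonneg_of_le (fun n => by positivity) (fun n => ?_)
    ((Real.summable_pow_div_factorial (2 * t ^ 2)).mul_left ((expE t) ^ 2))
  have h1 := sq_bound n ht
  have h2n : (n : ℝ) ≤ 2 ^ n := by exact_mod_cast (Nat.lt_two_pow_self (n := n)).le
  have hsq : (0 : ℝ) ≤ (bj n t) ^ 2 := sq_nonneg _
  calc (n : ℝ) * (bj n t) ^ 2
      ≤ (2 : ℝ) ^ n * ((expE t) ^ 2 * ((t ^ 2) ^ n / (n.factorial : ℝ))) := by
        have := mul_le_mul h2n h1 hsq (by positivity)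
        linarith
    _ = (expE t) ^ 2 * ((2 * t ^ 2) ^ n / (n.factorial : ℝ)) := by
        rw [mul_pow]
        ring

lemma tendsto_dd {t : ℝ} (ht : 0 ≤ t) :
    Filter.Tendsto (fun n : ℕ => dd t n) Filter.atTop (nhds 0) := by
  have base : Filter.Tendsto (fun n : ℕ => (t ^ 2) ^ n / (n.factorial : ℝ))
      Filter.atTop (nhds 0) := (Real.summable_pow_div_factorial (t ^ 2)).tendsto_atTop_zero
  set K : ℝ := 2 * t ^ 2 * (expE t) ^ 2 * (1 + t ^ 2) + 2 * (expE t) ^ 2 * t * t with hK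
  refine squeeze_zero_norm (fun n => ?_) (by simpa using base.const_mul K)
  have h1 := sq_bound n ht
  have h2 := sq_bound (n + 1) ht
  have h3 := prod_bound n ht
  have hE := expE_nonneg t
  have hf1 : (1 : ℝ) ≤ (n.factorial : ℝ) := by
    exact_mod_cast Nat.one_le_iff_ne_zero.mpr (Nat.factorial_ne_zero n)
  have hfp : (0 : ℝ) < (n.factorial : ℝ) := by linarith
  -- bound the (n+1)-term by an n-term expression
  have h2' : (bj (n + 1) t) ^ 2 ≤ (expE t) ^ 2 * t ^ 2 * ((t ^ 2) ^ n / (n.factorial : ℝ)) := by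
    refine h2.trans ?_
    rw [Nat.factorial_succ n]
    push_cast
    rw [pow_succ]
    calc (expE t) ^ 2 * ((t ^ 2) ^ n * t ^ 2 / (((n : ℝ) + 1) * (n.factorial : ℝ)))
        ≤ (expE t) ^ 2 * ((t ^ 2) ^ n * t ^ 2 / (1 * (n.factorial : ℝ))) := by
          gcongr
          linarith [Nat.cast_nonneg (α := ℝ) n]
      _ = (expE t) ^ 2 * t ^ 2 * ((t ^ 2) ^ n / (n.factorial : ℝ)) := by
          rw [one_mul]
          ring
  have habs : |dd t n| ≤ K * ((t ^ 2) ^ n / (n.factorial : ℝ)) := by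
    have hdd : |dd t n| ≤ 2 * t ^ 2 * ((bj n t) ^ 2 + (bj (n + 1) t) ^ 2)
        + t * ((2 * (n : ℝ) + 1) * |bj n t| * |bj (n + 1) t|) := by
      unfold dd
      have h4 : |t * (2 * (n : ℝ) + 1) * bj n t * bj (n + 1) t|
          = t * ((2 * (n : ℝ) + 1) * |bj n t| * |bj (n + 1) t|) := by
        rw [abs_mul, abs_mul, abs_mul, abs_of_nonneg ht,
          abs_of_nonneg (by positivity : (0:ℝ) ≤ 2 * (n : ℝ) + 1)]
        ring
      calc |2 * t ^ 2 * ((bj n t) ^ 2 + (bj (n + 1) t) ^ 2)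
            - t * (2 * (n : ℝ) + 1) * bj n t * bj (n + 1) t|
          ≤ |2 * t ^ 2 * ((bj n t) ^ 2 + (bj (n + 1) t) ^ 2)|
            + |t * (2 * (n : ℝ) + 1) * bj n t * bj (n + 1) t| := abs_sub _ _
        _ = 2 * t ^ 2 * ((bj n t) ^ 2 + (bj (n + 1) t) ^ 2)
            + t * ((2 * (n : ℝ) + 1) * |bj n t| * |bj (n + 1) t|) := by
            rw [h4, abs_of_nonneg (by positivity)]
    refine hdd.trans ?_
    have hmul3 : t * ((2 * (n : ℝ) + 1) * |bj n t| * |bj (n + 1) t|)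
        ≤ t * (2 * (expE t) ^ 2 * t * ((t ^ 2) ^ n / (n.factorial : ℝ))) :=
      mul_le_mul_of_nonneg_left h3 ht
    have hmul12 : 2 * t ^ 2 * ((bj n t) ^ 2 + (bj (n + 1) t) ^ 2)
        ≤ 2 * t ^ 2 * ((expE t) ^ 2 * ((t ^ 2) ^ n / (n.factorial : ℝ))
          + (expE t) ^ 2 * t ^ 2 * ((t ^ 2) ^ n / (n.factorial : ℝ))) :=
      mul_le_mul_of_nonneg_left (add_le_add h1 h2') (by positivity)
    rw [hK]
    nlinarith [hmul3, hmul12]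
  calc ‖dd t n‖ = |dd t n| := rfl
    _ ≤ K * ((t ^ 2) ^ n / (n.factorial : ℝ)) := habs

end SGmAux

open SGmAux in
/-- For every `t > 0`,
`Σ_{n≥1} n (J_n(2t))² = 2t²(J₀(2t))² − t J₀(2t)J₁(2t) + 2t²(J₁(2t))²`
(the `n = 0` term of the sum below vanishes).  With `u = t²` this is the
closed form of the normalization function `N(u)` of the modified
Susskind–Glogower coherent states. -/
theorem modified_susskind_glogower_normalization (t : ℝ) (ht : 0 < t) :
    ∑' n : ℕ, (n : ℝ) * (besselJ n (2 * t)) ^ 2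
      = 2 * t ^ 2 * (besselJ 0 (2 * t)) ^ 2
        - t * besselJ 0 (2 * t) * besselJ 1 (2 * t)
        + 2 * t ^ 2 * (besselJ 1 (2 * t)) ^ 2 := by
  have ht' := ht.le
  have hfun : (fun n : ℕ => (n : ℝ) * (besselJ n (2 * t)) ^ 2)
      = fun n : ℕ => (n : ℝ) * (bj n t) ^ 2 := by
    funext n
    rw [besselJ_eq]
  -- partial sums telescope
  have hps : ∀ N : ℕ, ∑ i ∈ Finset.range (N + 1), (i : ℝ) * (bj i t) ^ 2
      = dd t 0 - dd t N := by
    intro N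
    induction N with
    | zero => simp
    | succ N ih =>
      rw [Finset.sum_range_succ, ih]
      have htel := tele N ht
      push_cast
      linarith
  have hsum := summable_f (t := t) ht'
  have hlim : Filter.Tendsto (fun N : ℕ => ∑ i ∈ Finset.range N, (i : ℝ) * (bj i t) ^ 2)
      Filter.atTop (nhds (dd t 0)) := by
    have h1 : Filter.Tendsto (fun N : ℕ => dd t 0 - dd t N) Filter.atTop (nhds (dd t 0)) := by
      simpa using tendsto_const_nhds.sub (tendsto_dd (t := t) ht')
    have h2 : Filter.Tendsto (fun N : ℕ => ∑ i ∈ Finset.range (N + 1), (i : ℝ) * (bj i t) ^ 2)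
        Filter.atTop (nhds (dd t 0)) := h1.congr fun N => (hps N).symm
    exact (Filter.tendsto_add_atTop_iff_nat 1).mp h2
  have hhs : HasSum (fun n : ℕ => (n : ℝ) * (bj n t) ^ 2) (dd t 0) :=
    (hsum.hasSum_iff_tendsto_nat).mpr hlim
  rw [hfun, hhs.tsum_eq, besselJ_eq, besselJ_eq]
  unfold dd
  norm_num
  ring
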